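/- (Mayer-Vietoris Sequence for Graphs) Let Γ be a finite simple graph and let A and B be subgraphs of Γ with A ∪ B = Γ (union of vertex sets and of edge sets), with inclusion homomorphisms k : A → Γ, l : B → Γ, i : A ∩ B → A, j : A ∩ B → B. Then there exists a linear map δ : H⁰(A ∩ B) → H¹(Γ) such that the sequence 0 → H⁰(Γ) → H⁰(A) ⊕ H⁰(B) → H⁰(A ∩ B) → H¹(Γ) → H¹(A) ⊕ H¹(B) → H¹(A ∩ B) → 0 is exact, where the maps H^p(Γ) → H^p(A) ⊕ H^p(B) are k* ⊕ l* and the maps H^p(A) ⊕ H^p(B) → H^p(A ∩ B) are (f,g) ↦ i*f - j*g; in particular k* ⊕ l* is injective on H⁰(Γ), the sequence is exact at each intermediate term, and i* - j* is surjective onto H¹(A ∩ B). -/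

import Mathlib

open SimpleGraph Function

open scoped Classical

variable {U V W : Type*}

/-- The space `Ω¹(G)` of edge forms: antisymmetric real functions supported on adjacent pairs. -/
def edgeForms (G : SimpleGraph V) : Submodule ℝ (V → V → ℝ) where
  carrier := {ω | (∀ v w, ω v w = - ω w v) ∧ ∀ v w, ¬ G.Adj v w → ω v w = 0}
  add_mem' := fun {a b} ha hb => ⟨fun v w => by
      have h1 := ha.1 v w; have h2 := hb.1 v w
      simp only [Pi.add_apply]; linarith,
    fun v w h => by simp only [Pi.add_apply, ha.2 v w h, hb.2 v w h, add_zero]⟩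
  zero_mem' := ⟨fun v w => by simp, fun v w h => rfl⟩
  smul_mem' := fun c a ha => ⟨fun v w => by
      simp only [Pi.smul_apply, smul_eq_mul, ha.1 v w]; ring,
    fun v w h => by simp only [Pi.smul_apply, smul_eq_mul, ha.2 v w h, mul_zero]⟩

/-- The coboundary operator `D : Ω⁰(G) → Ω¹(G)`, `(Df)(v,w) = f w - f v` on adjacent pairs. -/
noncomputable def coboundary (G : SimpleGraph V) : (V → ℝ) →ₗ[ℝ] edgeForms G where
  toFun f := ⟨fun v w => if G.Adj v w then f w - f v else 0, by
    constructor
    · intro v w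
      dsimp only
      by_cases h : G.Adj v w
      · rw [if_pos h, if_pos h.symm]; ring
      · rw [if_neg h, if_neg (fun h' => h h'.symm)]; ring
    · intro v w h; dsimp only; rw [if_neg h]⟩
  map_add' f g := Subtype.ext <| funext fun v => funext fun w => by
    by_cases h : G.Adj v w <;> simp [h] <;> ring
  map_smul' c f := Subtype.ext <| funext fun v => funext fun w => by
    by_cases h : G.Adj v w <;> simp [h] <;> ring

@[simp] lemma coboundary_apply (G : SimpleGraph V) (f : V → ℝ) (v w : V) :
    (coboundary G f : V → V → ℝ) v w = if G.Adj v w then f w - f v else 0 := rfl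

/-- `H⁰(G) = ker D`. -/
noncomputable def H0 (G : SimpleGraph V) : Submodule ℝ (V → ℝ) := LinearMap.ker (coboundary G)

/-- `H¹(G) = Ω¹(G) / Im D`. -/
noncomputable abbrev H1 (G : SimpleGraph V) :=
  (edgeForms G) ⧸ (LinearMap.range (coboundary G))

/-- The pullback `F* : Ω¹(G₂) → Ω¹(G₁)` of a graph homomorphism. -/
noncomputable def pullback {G₁ : SimpleGraph U} {G₂ : SimpleGraph V} (F : G₁ →g G₂) :
    edgeForms G₂ →ₗ[ℝ] edgeForms G₁ where
  toFun ω := ⟨fun v w => if G₁.Adj v w then (ω : V → V → ℝ) (F v) (F w) else 0, by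
    constructor
    · intro v w
      dsimp only
      by_cases h : G₁.Adj v w
      · rw [if_pos h, if_pos h.symm, ω.2.1]
      · rw [if_neg h, if_neg (fun h' => h h'.symm), neg_zero]
    · intro v w h; dsimp only; rw [if_neg h]⟩
  map_add' a b := Subtype.ext <| funext fun v => funext fun w => by
    by_cases h : G₁.Adj v w <;> simp [h]
  map_smul' c a := Subtype.ext <| funext fun v => funext fun w => by
    by_cases h : G₁.Adj v w <;> simp [h]

@[simp] lemma pullback_apply {G₁ : SimpleGraph U} {G₂ : SimpleGraph V} (F : G₁ →g G₂)
    (ω : edgeForms G₂) (v w : U) :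
    (pullback F ω : U → U → ℝ) v w = if G₁.Adj v w then (ω : V → V → ℝ) (F v) (F w) else 0 := rfl

lemma pullback_coboundary {G₁ : SimpleGraph U} {G₂ : SimpleGraph V} (F : G₁ →g G₂) (f : V → ℝ) :
    pullback F (coboundary G₂ f) = coboundary G₁ (fun v => f (F v)) := by
  apply Subtype.ext
  funext v w
  by_cases h : G₁.Adj v w
  · have h2 := F.map_adj h
    simp [h, h2]
  · simp [h]

lemma pullback_range_le {G₁ : SimpleGraph U} {G₂ : SimpleGraph V} (F : G₁ →g G₂) :
    LinearMap.range (coboundary G₂) ≤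
      (LinearMap.range (coboundary G₁)).comap (pullback F) := by
  rintro ω ⟨f, rfl⟩
  exact ⟨fun v => f (F v), (pullback_coboundary F f).symm⟩

/-- The induced map `F* : H¹(G₂) → H¹(G₁)`. -/
noncomputable def pullbackH1 {G₁ : SimpleGraph U} {G₂ : SimpleGraph V} (F : G₁ →g G₂) :
    H1 G₂ →ₗ[ℝ] H1 G₁ :=
  Submodule.mapQ _ _ (pullback F) (pullback_range_le F)

lemma pullback_ker_le {G₁ : SimpleGraph U} {G₂ : SimpleGraph V} (F : G₁ →g G₂) :
    ∀ f ∈ H0 G₂, (LinearMap.funLeft ℝ ℝ ⇑F) f ∈ H0 G₁ := by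
  intro f hf
  have h0 : coboundary G₂ f = 0 := hf
  show coboundary G₁ (fun v => f (F v)) = 0
  rw [← pullback_coboundary F f, h0, map_zero]

/-- The induced map `F* : H⁰(G₂) → H⁰(G₁)`. -/
noncomputable def pullbackH0 {G₁ : SimpleGraph U} {G₂ : SimpleGraph V} (F : G₁ →g G₂) :
    H0 G₂ →ₗ[ℝ] H0 G₁ :=
  LinearMap.restrict (LinearMap.funLeft ℝ ℝ ⇑F) (pullback_ker_le F)

section MayerVietoris

variable {Γ : SimpleGraph V} (A B : Γ.Subgraph)

/-- `k* ⊕ l* : H⁰(Γ) → H⁰(A) ⊕ H⁰(B)`. -/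
noncomputable def mvH0left : H0 Γ →ₗ[ℝ] H0 A.coe × H0 B.coe :=
  (pullbackH0 A.hom).prod (pullbackH0 B.hom)

/-- `i* - j* : H⁰(A) ⊕ H⁰(B) → H⁰(A ∩ B)`. -/
noncomputable def mvH0right : H0 A.coe × H0 B.coe →ₗ[ℝ] H0 (A ⊓ B).coe :=
  pullbackH0 (Subgraph.inclusion (inf_le_left : A ⊓ B ≤ A)) ∘ₗ
      LinearMap.fst ℝ (H0 A.coe) (H0 B.coe)
    - pullbackH0 (Subgraph.inclusion (inf_le_right : A ⊓ B ≤ B)) ∘ₗ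
      LinearMap.snd ℝ (H0 A.coe) (H0 B.coe)

/-- `k* ⊕ l* : H¹(Γ) → H¹(A) ⊕ H¹(B)`. -/
noncomputable def mvH1left : H1 Γ →ₗ[ℝ] H1 A.coe × H1 B.coe :=
  (pullbackH1 A.hom).prod (pullbackH1 B.hom)

/-- `i* - j* : H¹(A) ⊕ H¹(B) → H¹(A ∩ B)`. -/
noncomputable def mvH1right : H1 A.coe × H1 B.coe →ₗ[ℝ] H1 (A ⊓ B).coe :=
  pullbackH1 (Subgraph.inclusion (inf_le_left : A ⊓ B ≤ A)) ∘ₗ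
      LinearMap.fst ℝ (H1 A.coe) (H1 B.coe)
    - pullbackH1 (Subgraph.inclusion (inf_le_right : A ⊓ B ≤ B)) ∘ₗ
      LinearMap.snd ℝ (H1 A.coe) (H1 B.coe)

section AuxMV

lemma mem_H0_iff {G : SimpleGraph V} {f : V → ℝ} :
    f ∈ H0 G ↔ ∀ v w, G.Adj v w → f w = f v := by
  constructor
  · intro h v w hvw
    have h0 : coboundary G f = 0 := h
    have := congrFun (congrFun (congrArg Subtype.val h0) v) w
    simp only [coboundary_apply, if_pos hvw] at this
    have h2 : (0 : edgeForms G).1 v w = 0 := rfl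
    rw [h2] at this
    linarith
  · intro h
    show coboundary G f = 0
    apply Subtype.ext; funext v w
    by_cases hvw : G.Adj v w
    · simp [hvw, h v w hvw]
    · simp [hvw]

/-- Extension of a function on `A ∩ B` by zero to all of `V`. -/
noncomputable def mvExt (f : ↥(A ⊓ B).verts → ℝ) : V → ℝ :=
  fun v => if h : v ∈ (A ⊓ B).verts then f ⟨v, h⟩ else 0

lemma mvExt_coe (f : ↥(A ⊓ B).verts → ℝ) (v : ↥(A ⊓ B).verts) :
    mvExt A B f ↑v = f v := by
  simp only [mvExt, dif_pos v.2]

lemma mvExt_add (f g : ↥(A ⊓ B).verts → ℝ) :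
    mvExt A B (f + g) = mvExt A B f + mvExt A B g := by
  funext v
  simp only [mvExt, Pi.add_apply]
  split <;> simp

lemma mvExt_smul (c : ℝ) (f : ↥(A ⊓ B).verts → ℝ) :
    mvExt A B (c • f) = c • mvExt A B f := by
  funext v
  simp only [mvExt, Pi.smul_apply]
  split <;> simp

/-- The glued 1-form on `Γ` used to define the connecting map. -/
noncomputable def mvDeltaForm (f : ↥(A ⊓ B).verts → ℝ) : edgeForms Γ :=
  ⟨fun v w => if A.Adj v w then mvExt A B f w - mvExt A B f v else 0, by
    constructor
    · intro v w
      dsimp only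
      by_cases h : A.Adj v w
      · rw [if_pos h, if_pos h.symm]; ring
      · rw [if_neg h, if_neg (fun h' => h h'.symm), neg_zero]
    · intro v w h
      dsimp only
      rw [if_neg (fun h' => h (A.adj_sub h'))]⟩

/-- The connecting map `δ : H⁰(A ∩ B) → H¹(Γ)`. -/
noncomputable def mvDelta : H0 (A ⊓ B).coe →ₗ[ℝ] H1 Γ where
  toFun f := Submodule.Quotient.mk (mvDeltaForm A B f.1)
  map_add' f g := by
    rw [← Submodule.Quotient.mk_add]
    congr 1
    apply Subtype.ext; funext v w
    show (if A.Adj v w then mvExt A B (f.1 + g.1) w - mvExt A B (f.1 + g.1) v else 0) = _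
    rw [mvExt_add]
    by_cases h : A.Adj v w
    · simp only [if_pos h]
      show _ = (if A.Adj v w then _ else _ : ℝ) + (if A.Adj v w then _ else _ : ℝ)
      rw [if_pos h, if_pos h]
      simp only [Pi.add_apply]; ring
    · simp only [if_neg h]
      show (0:ℝ) = (if A.Adj v w then _ else _) + (if A.Adj v w then _ else _)
      rw [if_neg h, if_neg h, add_zero]
  map_smul' c f := by
    rw [RingHom.id_apply, ← Submodule.Quotient.mk_smul]
    congr 1
    apply Subtype.ext; funext v w
    show (if A.Adj v w then mvExt A B (c • f.1) w - mvExt A B (c • f.1) v else 0) = _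
    rw [mvExt_smul]
    by_cases h : A.Adj v w
    · simp only [if_pos h]
      show _ = c • (if A.Adj v w then _ else _ : ℝ)
      rw [if_pos h]
      simp only [Pi.smul_apply, smul_eq_mul]; ring
    · simp only [if_neg h]
      show (0:ℝ) = c • (if A.Adj v w then _ else _)
      rw [if_neg h, smul_zero]

lemma mv_vert_cases (hAB : A ⊔ B = ⊤) (v : V) : v ∈ A.verts ∨ v ∈ B.verts := by
  have hv : v ∈ (A ⊔ B).verts := by rw [hAB, Subgraph.verts_top]; trivial
  rwa [Subgraph.verts_sup] at hv

lemma mv_adj_cases (hAB : A ⊔ B = ⊤) {v w : V} (h : Γ.Adj v w) :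
    A.Adj v w ∨ B.Adj v w := by
  have hv : (A ⊔ B).Adj v w := by rw [hAB, Subgraph.top_adj]; exact h
  rwa [Subgraph.sup_adj] at hv

lemma mvH0right_coe (g : H0 A.coe) (h : H0 B.coe) (v : ↥(A ⊓ B).verts) :
    ((mvH0right A B (g, h) : H0 (A ⊓ B).coe) : ↥(A ⊓ B).verts → ℝ) v
      = (g : ↥A.verts → ℝ) ⟨↑v, v.2.1⟩ - (h : ↥B.verts → ℝ) ⟨↑v, v.2.2⟩ := rfl

lemma ef_congr {G : SimpleGraph V} {α β : edgeForms G} (h : α = β) (v w : V) :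
    (α : V → V → ℝ) v w = (β : V → V → ℝ) v w := by rw [h]

lemma mv_inj (hAB : A ⊔ B = ⊤) : Function.Injective ⇑(mvH0left A B) := by
  intro x y hxy
  have hA : ∀ v : ↥A.verts, (x : V → ℝ) ↑v = (y : V → ℝ) ↑v := fun v =>
    congrFun (congrArg Subtype.val (congrArg Prod.fst hxy)) v
  have hB : ∀ v : ↥B.verts, (x : V → ℝ) ↑v = (y : V → ℝ) ↑v := fun v =>
    congrFun (congrArg Subtype.val (congrArg Prod.snd hxy)) v
  apply Subtype.ext; funext v
  rcases mv_vert_cases A B hAB v with hv | hv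
  · exact hA ⟨v, hv⟩
  · exact hB ⟨v, hv⟩

lemma mv_exact1 (hAB : A ⊔ B = ⊤) :
    Function.Exact ⇑(mvH0left A B) ⇑(mvH0right A B) := by
  rintro ⟨g, h⟩
  constructor
  · intro hy
    have hgh : ∀ v : ↥(A ⊓ B).verts,
        (g : ↥A.verts → ℝ) ⟨↑v, v.2.1⟩ = (h : ↥B.verts → ℝ) ⟨↑v, v.2.2⟩ := by
      intro v
      have h0 := congrFun (congrArg Subtype.val hy) v
      rw [mvH0right_coe] at h0
      have h1 : ((0 : H0 (A ⊓ B).coe) : ↥(A ⊓ B).verts → ℝ) v = 0 := rfl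
      rw [h1] at h0
      linarith
    set F : V → ℝ := fun v =>
      if hv : v ∈ A.verts then (g : ↥A.verts → ℝ) ⟨v, hv⟩
      else if hv : v ∈ B.verts then (h : ↥B.verts → ℝ) ⟨v, hv⟩ else 0 with hFdef
    have hFA : ∀ (v : V) (hv : v ∈ A.verts), F v = (g : ↥A.verts → ℝ) ⟨v, hv⟩ := by
      intro v hv; simp only [hFdef, dif_pos hv]
    have hFB : ∀ (v : V) (hv : v ∈ B.verts), F v = (h : ↥B.verts → ℝ) ⟨v, hv⟩ := by
      intro v hv
      by_cases hva : v ∈ A.verts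
      · simp only [hFdef, dif_pos hva]
        exact hgh ⟨v, ⟨hva, hv⟩⟩
      · simp only [hFdef, dif_neg hva, dif_pos hv]
    have hFmem : F ∈ H0 Γ := by
      rw [mem_H0_iff]
      intro v w hvw
      rcases mv_adj_cases A B hAB hvw with ha | hb
      · rw [hFA v (A.edge_vert ha), hFA w (A.edge_vert ha.symm)]
        exact mem_H0_iff.1 g.2 ⟨v, A.edge_vert ha⟩ ⟨w, A.edge_vert ha.symm⟩ ha
      · rw [hFB v (B.edge_vert hb), hFB w (B.edge_vert hb.symm)]
        exact mem_H0_iff.1 h.2 ⟨v, B.edge_vert hb⟩ ⟨w, B.edge_vert hb.symm⟩ hb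
    refine ⟨⟨F, hFmem⟩, ?_⟩
    refine Prod.ext ?_ ?_
    · apply Subtype.ext; funext v
      exact hFA ↑v v.2
    · apply Subtype.ext; funext v
      exact hFB ↑v v.2
  · rintro ⟨x, hx⟩
    rw [← hx]
    apply Subtype.ext; funext v
    show (x : V → ℝ) ↑v - (x : V → ℝ) ↑v = 0
    ring

lemma mv_exact2 (hAB : A ⊔ B = ⊤) :
    Function.Exact ⇑(mvH0right A B) ⇑(mvDelta A B) := by
  intro f
  constructor
  · intro hf
    have hf' : Submodule.Quotient.mk (mvDeltaForm A B f.1) = (0 : H1 Γ) := hf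
    rw [Submodule.Quotient.mk_eq_zero] at hf'
    obtain ⟨F, hF⟩ := hf'
    have hFp : ∀ v w : V, (if Γ.Adj v w then F w - F v else 0)
        = (if A.Adj v w then mvExt A B f.1 w - mvExt A B f.1 v else 0) :=
      fun v w => congrFun (congrFun (congrArg Subtype.val hF) v) w
    have hg : (fun v : ↥A.verts => mvExt A B f.1 ↑v - F ↑v) ∈ H0 A.coe := by
      rw [mem_H0_iff]
      intro v w hvw
      have ha : A.Adj ↑v ↑w := hvw
      have := hFp ↑v ↑w
      rw [if_pos (A.adj_sub ha), if_pos ha] at this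
      linarith
    have hh : (fun v : ↥B.verts => - F ↑v) ∈ H0 B.coe := by
      rw [mem_H0_iff]
      intro v w hvw
      have hb : B.Adj ↑v ↑w := hvw
      have key := hFp ↑v ↑w
      rw [if_pos (B.adj_sub hb)] at key
      by_cases ha : A.Adj ↑v ↑w
      · rw [if_pos ha] at key
        have hmem : (↑v : V) ∈ (A ⊓ B).verts := ⟨A.edge_vert ha, B.edge_vert hb⟩
        have hmem' : (↑w : V) ∈ (A ⊓ B).verts := ⟨A.edge_vert ha.symm, B.edge_vert hb.symm⟩
        have hcl : f.1 ⟨↑w, hmem'⟩ = f.1 ⟨↑v, hmem⟩ :=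
          mem_H0_iff.1 f.2 ⟨↑v, hmem⟩ ⟨↑w, hmem'⟩ (by exact ⟨ha, hb⟩)
        have e1 : mvExt A B f.1 ↑v = f.1 ⟨↑v, hmem⟩ := by simp only [mvExt, dif_pos hmem]
        have e2 : mvExt A B f.1 ↑w = f.1 ⟨↑w, hmem'⟩ := by simp only [mvExt, dif_pos hmem']
        rw [e1, e2, hcl] at key
        simp only [neg_sub, sub_self] at key ⊢
        linarith
      · rw [if_neg ha] at key
        linarith
    refine ⟨(⟨_, hg⟩, ⟨_, hh⟩), ?_⟩
    apply Subtype.ext; funext v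
    rw [mvH0right_coe]
    show (mvExt A B f.1 ↑v - F ↑v) - (- F ↑v) = f.1 v
    rw [mvExt_coe]
    ring
  · rintro ⟨⟨g, h⟩, hx⟩
    rw [← hx]
    show Submodule.Quotient.mk (mvDeltaForm A B (mvH0right A B (g, h)).1) = 0
    rw [Submodule.Quotient.mk_eq_zero]
    set f : ↥(A ⊓ B).verts → ℝ := (mvH0right A B (g, h)).1 with hfdef
    have hfval : ∀ v : ↥(A ⊓ B).verts,
        f v = (g : ↥A.verts → ℝ) ⟨↑v, v.2.1⟩ - (h : ↥B.verts → ℝ) ⟨↑v, v.2.2⟩ :=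
      fun v => mvH0right_coe A B g h v
    set F : V → ℝ := fun u =>
      if hu : u ∈ A.verts then mvExt A B f u - (g : ↥A.verts → ℝ) ⟨u, hu⟩
      else if hu : u ∈ B.verts then - (h : ↥B.verts → ℝ) ⟨u, hu⟩ else 0 with hFdef
    have hFA : ∀ (u : V) (hu : u ∈ A.verts),
        F u = mvExt A B f u - (g : ↥A.verts → ℝ) ⟨u, hu⟩ := by
      intro u hu; simp only [hFdef, dif_pos hu]
    have hFB : ∀ (u : V) (hu : u ∈ B.verts), F u = - (h : ↥B.verts → ℝ) ⟨u, hu⟩ := by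
      intro u hu
      by_cases hua : u ∈ A.verts
      · have hmem : u ∈ (A ⊓ B).verts := ⟨hua, hu⟩
        have e1 : mvExt A B f u = f ⟨u, hmem⟩ := by simp only [mvExt, dif_pos hmem]
        simp only [hFdef, dif_pos hua]
        rw [e1, hfval ⟨u, hmem⟩]
        ring
      · simp only [hFdef, dif_neg hua, dif_pos hu]
    refine ⟨F, ?_⟩
    apply Subtype.ext; funext v w
    show (if Γ.Adj v w then F w - F v else 0)
        = (if A.Adj v w then mvExt A B f w - mvExt A B f v else 0)
    by_cases hΓ : Γ.Adj v w
    · rw [if_pos hΓ]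
      by_cases ha : A.Adj v w
      · rw [if_pos ha, hFA v (A.edge_vert ha), hFA w (A.edge_vert ha.symm)]
        have hgcl : (g : ↥A.verts → ℝ) ⟨w, A.edge_vert ha.symm⟩
            = (g : ↥A.verts → ℝ) ⟨v, A.edge_vert ha⟩ :=
          mem_H0_iff.1 g.2 ⟨v, A.edge_vert ha⟩ ⟨w, A.edge_vert ha.symm⟩ ha
        rw [hgcl]
        ring
      · rw [if_neg ha]
        rcases mv_adj_cases A B hAB hΓ with ha' | hb
        · exact absurd ha' ha
        · rw [hFB v (B.edge_vert hb), hFB w (B.edge_vert hb.symm)]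
          have hhcl : (h : ↥B.verts → ℝ) ⟨w, B.edge_vert hb.symm⟩
              = (h : ↥B.verts → ℝ) ⟨v, B.edge_vert hb⟩ :=
            mem_H0_iff.1 h.2 ⟨v, B.edge_vert hb⟩ ⟨w, B.edge_vert hb.symm⟩ hb
          rw [hhcl]
          ring
    · rw [if_neg hΓ, if_neg (fun ha => hΓ (A.adj_sub ha))]

lemma mvH1left_mk (ω : edgeForms Γ) :
    mvH1left A B (Submodule.Quotient.mk ω)
      = (Submodule.Quotient.mk (pullback A.hom ω),
         Submodule.Quotient.mk (pullback B.hom ω)) := rfl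

lemma mvH1right_mk (α : edgeForms A.coe) (β : edgeForms B.coe) :
    mvH1right A B (Submodule.Quotient.mk α, Submodule.Quotient.mk β)
      = Submodule.Quotient.mk
          (pullback (Subgraph.inclusion (inf_le_left : A ⊓ B ≤ A)) α
            - pullback (Subgraph.inclusion (inf_le_right : A ⊓ B ≤ B)) β) := by
  rw [Submodule.Quotient.mk_sub]
  rfl

lemma mv_exact3 (hAB : A ⊔ B = ⊤) :
    Function.Exact ⇑(mvDelta A B) ⇑(mvH1left A B) := by
  intro y
  obtain ⟨ω, rfl⟩ := Submodule.Quotient.mk_surjective _ y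
  constructor
  · intro hy
    rw [mvH1left_mk] at hy
    have h1 := congrArg Prod.fst hy
    have h2 := congrArg Prod.snd hy
    rw [show ((0 : H1 A.coe × H1 B.coe)).1 = 0 from rfl] at h1
    rw [show ((0 : H1 A.coe × H1 B.coe)).2 = 0 from rfl] at h2
    rw [Submodule.Quotient.mk_eq_zero] at h1 h2
    obtain ⟨g, hg⟩ := h1
    obtain ⟨h, hh⟩ := h2
    have hgp : ∀ v w : ↥A.verts, (if A.coe.Adj v w then g w - g v else 0)
        = (if A.coe.Adj v w then (ω : V → V → ℝ) ↑v ↑w else 0) :=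
      fun v w => congrFun (congrFun (congrArg Subtype.val hg) v) w
    have hhp : ∀ v w : ↥B.verts, (if B.coe.Adj v w then h w - h v else 0)
        = (if B.coe.Adj v w then (ω : V → V → ℝ) ↑v ↑w else 0) :=
      fun v w => congrFun (congrFun (congrArg Subtype.val hh) v) w
    set f : ↥(A ⊓ B).verts → ℝ :=
      fun v => g ⟨↑v, v.2.1⟩ - h ⟨↑v, v.2.2⟩ with hfdef
    have hfmem : f ∈ H0 (A ⊓ B).coe := by
      rw [mem_H0_iff]
      intro v w hvw
      have hc : (A ⊓ B).Adj ↑v ↑w := hvw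
      have ha : A.Adj ↑v ↑w := hc.1
      have hb : B.Adj ↑v ↑w := hc.2
      have e1 := hgp ⟨↑v, v.2.1⟩ ⟨↑w, w.2.1⟩
      rw [if_pos (show A.coe.Adj ⟨↑v, v.2.1⟩ ⟨↑w, w.2.1⟩ from ha),
        if_pos (show A.coe.Adj ⟨↑v, v.2.1⟩ ⟨↑w, w.2.1⟩ from ha)] at e1
      have e2 := hhp ⟨↑v, v.2.2⟩ ⟨↑w, w.2.2⟩
      rw [if_pos (show B.coe.Adj ⟨↑v, v.2.2⟩ ⟨↑w, w.2.2⟩ from hb),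
        if_pos (show B.coe.Adj ⟨↑v, v.2.2⟩ ⟨↑w, w.2.2⟩ from hb)] at e2
      simp only [hfdef]
      linarith
    refine ⟨⟨f, hfmem⟩, ?_⟩
    show Submodule.Quotient.mk (mvDeltaForm A B f) = Submodule.Quotient.mk ω
    rw [Submodule.Quotient.eq]
    set F : V → ℝ := fun u =>
      if hu : u ∈ A.verts then mvExt A B f u - g ⟨u, hu⟩
      else if hu : u ∈ B.verts then - h ⟨u, hu⟩ else 0 with hFdef
    have hFA : ∀ (u : V) (hu : u ∈ A.verts), F u = mvExt A B f u - g ⟨u, hu⟩ := by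
      intro u hu; simp only [hFdef, dif_pos hu]
    have hFB : ∀ (u : V) (hu : u ∈ B.verts), F u = - h ⟨u, hu⟩ := by
      intro u hu
      by_cases hua : u ∈ A.verts
      · have hmem : u ∈ (A ⊓ B).verts := ⟨hua, hu⟩
        have e1 : mvExt A B f u = f ⟨u, hmem⟩ := by simp only [mvExt, dif_pos hmem]
        simp only [hFdef, dif_pos hua, e1]
        show g ⟨u, hmem.1⟩ - h ⟨u, hmem.2⟩ - g ⟨u, hua⟩ = - h ⟨u, hu⟩
        ring_nf
      · simp only [hFdef, dif_neg hua, dif_pos hu]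
    refine ⟨F, ?_⟩
    apply Subtype.ext; funext v w
    show (if Γ.Adj v w then F w - F v else 0)
        = (if A.Adj v w then mvExt A B f w - mvExt A B f v else 0) - (ω : V → V → ℝ) v w
    by_cases hΓ : Γ.Adj v w
    · rw [if_pos hΓ]
      by_cases ha : A.Adj v w
      · rw [if_pos ha, hFA v (A.edge_vert ha), hFA w (A.edge_vert ha.symm)]
        have e1 := hgp ⟨v, A.edge_vert ha⟩ ⟨w, A.edge_vert ha.symm⟩
        rw [if_pos (show A.coe.Adj ⟨v, A.edge_vert ha⟩ ⟨w, A.edge_vert ha.symm⟩ from ha),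
          if_pos (show A.coe.Adj ⟨v, A.edge_vert ha⟩ ⟨w, A.edge_vert ha.symm⟩ from ha)] at e1
        linarith
      · rw [if_neg ha]
        rcases mv_adj_cases A B hAB hΓ with ha' | hb
        · exact absurd ha' ha
        · rw [hFB v (B.edge_vert hb), hFB w (B.edge_vert hb.symm)]
          have e2 := hhp ⟨v, B.edge_vert hb⟩ ⟨w, B.edge_vert hb.symm⟩
          rw [if_pos (show B.coe.Adj ⟨v, B.edge_vert hb⟩ ⟨w, B.edge_vert hb.symm⟩ from hb),
            if_pos (show B.coe.Adj ⟨v, B.edge_vert hb⟩ ⟨w, B.edge_vert hb.symm⟩ from hb)] at e2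
          linarith
    · rw [if_neg hΓ, if_neg (fun ha => hΓ (A.adj_sub ha)), ω.2.2 v w hΓ]
      ring
  · rintro ⟨x, hx⟩
    rw [← hx]
    show mvH1left A B (Submodule.Quotient.mk (mvDeltaForm A B x.1)) = 0
    rw [mvH1left_mk]
    refine Prod.ext ?_ ?_
    · show Submodule.Quotient.mk (pullback A.hom (mvDeltaForm A B x.1)) = 0
      rw [Submodule.Quotient.mk_eq_zero]
      refine ⟨fun v : ↥A.verts => mvExt A B x.1 ↑v, ?_⟩
      apply Subtype.ext; funext v w
      show (if A.coe.Adj v w then mvExt A B x.1 ↑w - mvExt A B x.1 ↑v else 0)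
          = (if A.coe.Adj v w then (mvDeltaForm A B x.1 : V → V → ℝ) ↑v ↑w else 0)
      by_cases hc : A.coe.Adj v w
      · rw [if_pos hc, if_pos hc]
        show _ = (if A.Adj ↑v ↑w then mvExt A B x.1 ↑w - mvExt A B x.1 ↑v else 0)
        rw [if_pos (show A.Adj ↑v ↑w from hc)]
      · rw [if_neg hc, if_neg hc]
    · show Submodule.Quotient.mk (pullback B.hom (mvDeltaForm A B x.1)) = 0
      rw [Submodule.Quotient.mk_eq_zero]
      have hzero : pullback B.hom (mvDeltaForm A B x.1) = 0 := by
        apply Subtype.ext; funext v w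
        show (if B.coe.Adj v w then (mvDeltaForm A B x.1 : V → V → ℝ) ↑v ↑w else 0) = 0
        by_cases hb : B.coe.Adj v w
        · rw [if_pos hb]
          show (if A.Adj ↑v ↑w then mvExt A B x.1 ↑w - mvExt A B x.1 ↑v else 0) = 0
          by_cases ha : A.Adj ↑v ↑w
          · rw [if_pos ha]
            have hm : (↑v : V) ∈ (A ⊓ B).verts := ⟨A.edge_vert ha, B.edge_vert hb⟩
            have hm' : (↑w : V) ∈ (A ⊓ B).verts := ⟨A.edge_vert ha.symm, B.edge_vert (B.adj_symm hb)⟩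
            have hcl : x.1 ⟨↑w, hm'⟩ = x.1 ⟨↑v, hm⟩ :=
              mem_H0_iff.1 x.2 ⟨↑v, hm⟩ ⟨↑w, hm'⟩ (by exact ⟨ha, hb⟩)
            have e1 : mvExt A B x.1 ↑v = x.1 ⟨↑v, hm⟩ := by simp only [mvExt, dif_pos hm]
            have e2 : mvExt A B x.1 ↑w = x.1 ⟨↑w, hm'⟩ := by simp only [mvExt, dif_pos hm']
            rw [e1, e2, hcl]
            ring
          · rw [if_neg ha]
        · rw [if_neg hb]
      rw [hzero]
      exact Submodule.zero_mem _

lemma mv_exact4 : Function.Exact ⇑(mvH1left A B) ⇑(mvH1right A B) := by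
  rintro ⟨a, b⟩
  obtain ⟨α, rfl⟩ := Submodule.Quotient.mk_surjective _ a
  obtain ⟨β, rfl⟩ := Submodule.Quotient.mk_surjective _ b
  constructor
  · intro hy
    rw [mvH1right_mk, Submodule.Quotient.mk_eq_zero] at hy
    obtain ⟨f, hf⟩ := hy
    have hfp : ∀ v w : ↥(A ⊓ B).verts,
        (if (A ⊓ B).coe.Adj v w then f w - f v else 0)
          = (pullback (Subgraph.inclusion (inf_le_left : A ⊓ B ≤ A)) α
                : ↥(edgeForms (A ⊓ B).coe)).1 v w
            - (pullback (Subgraph.inclusion (inf_le_right : A ⊓ B ≤ B)) β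
                : ↥(edgeForms (A ⊓ B).coe)).1 v w := by
      intro v w
      have h0 := congrFun (congrFun (congrArg Subtype.val hf) v) w
      simpa using h0
    set ft : ↥B.verts → ℝ :=
      fun v => if hv : (↑v : V) ∈ (A ⊓ B).verts then f ⟨↑v, hv⟩ else 0 with hftdef
    set β' : edgeForms B.coe := β + coboundary B.coe ft with hβ'def
    have key : ∀ (v w : V) (ha : A.Adj v w) (hb : B.Adj v w),
        (α : ↑A.verts → ↑A.verts → ℝ) ⟨v, A.edge_vert ha⟩ ⟨w, A.edge_vert ha.symm⟩
          = (β' : ↑B.verts → ↑B.verts → ℝ) ⟨v, B.edge_vert hb⟩ ⟨w, B.edge_vert hb.symm⟩ := by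
      intro v w ha hb
      have hm : v ∈ (A ⊓ B).verts := ⟨A.edge_vert ha, B.edge_vert hb⟩
      have hm' : w ∈ (A ⊓ B).verts := ⟨A.edge_vert ha.symm, B.edge_vert hb.symm⟩
      have hadj : (A ⊓ B).coe.Adj ⟨v, hm⟩ ⟨w, hm'⟩ := by exact ⟨ha, hb⟩
      have e0 := hfp ⟨v, hm⟩ ⟨w, hm'⟩
      rw [if_pos hadj] at e0
      have eA : (pullback (Subgraph.inclusion (inf_le_left : A ⊓ B ≤ A)) α
          : ↥(edgeForms (A ⊓ B).coe)).1 ⟨v, hm⟩ ⟨w, hm'⟩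
            = (α : ↑A.verts → ↑A.verts → ℝ) ⟨v, A.edge_vert ha⟩ ⟨w, A.edge_vert ha.symm⟩ := by
        rw [pullback_apply, if_pos hadj]
        rfl
      have eB : (pullback (Subgraph.inclusion (inf_le_right : A ⊓ B ≤ B)) β
          : ↥(edgeForms (A ⊓ B).coe)).1 ⟨v, hm⟩ ⟨w, hm'⟩
            = (β : ↑B.verts → ↑B.verts → ℝ) ⟨v, B.edge_vert hb⟩ ⟨w, B.edge_vert hb.symm⟩ := by
        rw [pullback_apply, if_pos hadj]
        rfl
      rw [eA, eB] at e0
      have eβ' : (β' : ↑B.verts → ↑B.verts → ℝ) ⟨v, B.edge_vert hb⟩ ⟨w, B.edge_vert hb.symm⟩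
          = (β : ↑B.verts → ↑B.verts → ℝ) ⟨v, B.edge_vert hb⟩ ⟨w, B.edge_vert hb.symm⟩
            + (ft ⟨w, B.edge_vert hb.symm⟩ - ft ⟨v, B.edge_vert hb⟩) := by
        have ecoe : (β' : ↑B.verts → ↑B.verts → ℝ) ⟨v, B.edge_vert hb⟩ ⟨w, B.edge_vert hb.symm⟩
            = (β : ↑B.verts → ↑B.verts → ℝ) ⟨v, B.edge_vert hb⟩ ⟨w, B.edge_vert hb.symm⟩
              + (coboundary B.coe ft : ↥(edgeForms B.coe)).1
                  ⟨v, B.edge_vert hb⟩ ⟨w, B.edge_vert hb.symm⟩ := by rw [hβ'def]; rfl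
        rw [ecoe, coboundary_apply,
          if_pos (show B.coe.Adj ⟨v, B.edge_vert hb⟩ ⟨w, B.edge_vert hb.symm⟩ from hb)]
      have eftv : ft ⟨v, B.edge_vert hb⟩ = f ⟨v, hm⟩ := by
        simp only [hftdef]; rw [dif_pos hm]
      have eftw : ft ⟨w, B.edge_vert hb.symm⟩ = f ⟨w, hm'⟩ := by
        simp only [hftdef]; rw [dif_pos hm']
      rw [eβ', eftv, eftw]
      linarith
    have hωmem : (fun v w : V =>
        if ha : A.Adj v w then (α : ↑A.verts → ↑A.verts → ℝ) ⟨v, A.edge_vert ha⟩ ⟨w, A.edge_vert ha.symm⟩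
        else if hb : B.Adj v w then (β' : ↑B.verts → ↑B.verts → ℝ) ⟨v, B.edge_vert hb⟩ ⟨w, B.edge_vert hb.symm⟩
        else 0) ∈ edgeForms Γ := by
      constructor
      · intro v w
        dsimp only
        by_cases ha : A.Adj v w
        · rw [dif_pos ha, dif_pos ha.symm]
          exact α.2.1 ⟨v, A.edge_vert ha⟩ ⟨w, A.edge_vert ha.symm⟩
        · by_cases hb : B.Adj v w
          · rw [dif_neg ha, dif_neg (fun h' : A.Adj w v => ha h'.symm),
              dif_pos hb, dif_pos hb.symm]
            exact β'.2.1 ⟨v, B.edge_vert hb⟩ ⟨w, B.edge_vert hb.symm⟩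
          · rw [dif_neg ha, dif_neg (fun h' : A.Adj w v => ha h'.symm),
              dif_neg hb, dif_neg (fun h' : B.Adj w v => hb h'.symm), neg_zero]
      · intro v w h
        dsimp only
        rw [dif_neg (fun ha => h (A.adj_sub ha)), dif_neg (fun hb => h (B.adj_sub hb))]
    refine ⟨Submodule.Quotient.mk ⟨_, hωmem⟩, ?_⟩
    rw [mvH1left_mk]
    refine Prod.ext ?_ ?_
    · show Submodule.Quotient.mk (pullback A.hom ⟨_, hωmem⟩) = Submodule.Quotient.mk α
      congr 1
      apply Subtype.ext; funext v w
      show (if A.coe.Adj v w then _ else 0) = (α : ↑A.verts → ↑A.verts → ℝ) v w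
      by_cases hc : A.coe.Adj v w
      · rw [if_pos hc]
        show (if ha : A.Adj ↑v ↑w then _ else _) = _
        rw [dif_pos (show A.Adj ↑v ↑w from hc)]
        rfl
      · rw [if_neg hc]
        exact (α.2.2 v w hc).symm
    · show Submodule.Quotient.mk (pullback B.hom ⟨_, hωmem⟩) = Submodule.Quotient.mk β
      have hform : pullback B.hom ⟨_, hωmem⟩ = β' := by
        apply Subtype.ext; funext v w
        show (if B.coe.Adj v w then _ else 0) = (β' : ↑B.verts → ↑B.verts → ℝ) v w
        by_cases hc : B.coe.Adj v w
        · rw [if_pos hc]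
          show (if ha : A.Adj ↑v ↑w then _ else _) = _
          by_cases ha : A.Adj ↑v ↑w
          · rw [dif_pos ha]
            exact key ↑v ↑w ha hc
            
          · rw [dif_neg ha]
            rw [dif_pos (show B.Adj (B.hom v) (B.hom w) from hc)]
            rfl
        · rw [if_neg hc]
          exact (β'.2.2 v w hc).symm
      rw [hform, Submodule.Quotient.eq]
      refine ⟨ft, ?_⟩
      rw [hβ'def]
      abel
  · rintro ⟨x, hx⟩
    rw [← hx]
    obtain ⟨ω, rfl⟩ := Submodule.Quotient.mk_surjective _ x
    rw [mvH1left_mk, mvH1right_mk]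
    have hforms : pullback (Subgraph.inclusion (inf_le_left : A ⊓ B ≤ A)) (pullback A.hom ω)
        = pullback (Subgraph.inclusion (inf_le_right : A ⊓ B ≤ B)) (pullback B.hom ω) := by
      apply Subtype.ext; funext v w
      simp only [pullback_apply]
      by_cases hc : (A ⊓ B).coe.Adj v w
      · have hc' : (A ⊓ B).Adj ↑v ↑w := hc
        rw [if_pos hc, if_pos hc,
          if_pos (show A.coe.Adj ((Subgraph.inclusion (inf_le_left : A ⊓ B ≤ A)) v)
            ((Subgraph.inclusion (inf_le_left : A ⊓ B ≤ A)) w) from hc'.1),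
          if_pos (show B.coe.Adj ((Subgraph.inclusion (inf_le_right : A ⊓ B ≤ B)) v)
            ((Subgraph.inclusion (inf_le_right : A ⊓ B ≤ B)) w) from hc'.2)]
        rfl
      · rw [if_neg hc, if_neg hc]
    rw [hforms, sub_self, Submodule.Quotient.mk_zero]

lemma mv_surj : Function.Surjective ⇑(mvH1right A B) := by
  intro y
  obtain ⟨γ, rfl⟩ := Submodule.Quotient.mk_surjective _ y
  have hαmem : (fun v w : ↥A.verts =>
      if h : (A ⊓ B).Adj ↑v ↑w then
        (γ : ↑(A ⊓ B).verts → ↑(A ⊓ B).verts → ℝ) ⟨↑v, (A ⊓ B).edge_vert h⟩ ⟨↑w, (A ⊓ B).edge_vert h.symm⟩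
      else 0) ∈ edgeForms A.coe := by
    constructor
    · intro v w
      dsimp only
      by_cases h : (A ⊓ B).Adj ↑v ↑w
      · rw [dif_pos h, dif_pos h.symm]
        exact γ.2.1 ⟨↑v, (A ⊓ B).edge_vert h⟩ ⟨↑w, (A ⊓ B).edge_vert h.symm⟩
      · rw [dif_neg h, dif_neg (fun h' => h h'.symm), neg_zero]
    · intro v w h
      dsimp only
      rw [dif_neg (fun h' : (A ⊓ B).Adj ↑v ↑w => h h'.1)]
  refine ⟨(Submodule.Quotient.mk ⟨_, hαmem⟩, 0), ?_⟩
  have h0 : mvH1right A B (Submodule.Quotient.mk ⟨_, hαmem⟩, 0)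
      = Submodule.Quotient.mk
          (pullback (Subgraph.inclusion (inf_le_left : A ⊓ B ≤ A)) ⟨_, hαmem⟩) := by
    show pullbackH1 (Subgraph.inclusion (inf_le_left : A ⊓ B ≤ A))
        (Submodule.Quotient.mk ⟨_, hαmem⟩)
      - pullbackH1 (Subgraph.inclusion (inf_le_right : A ⊓ B ≤ B)) 0 = _
    rw [map_zero, sub_zero]
    rfl
  rw [h0]
  congr 1
  apply Subtype.ext; funext v w
  show (if (A ⊓ B).coe.Adj v w then _ else 0) = (γ : ↑(A ⊓ B).verts → ↑(A ⊓ B).verts → ℝ) v w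
  by_cases hc : (A ⊓ B).coe.Adj v w
  · rw [if_pos hc]
    show (if h : (A ⊓ B).Adj ↑v ↑w then _ else _) = _
    rw [dif_pos (show (A ⊓ B).Adj ↑v ↑w from hc)]
    rfl
  · rw [if_neg hc]
    exact (γ.2.2 v w hc).symm

end AuxMV

/-- Mayer–Vietoris Sequence for Graphs. Let `Γ` be a finite simple
graph and `A`, `B` subgraphs with `A ∪ B = Γ`. Then there is a connecting map
`δ : H⁰(A ∩ B) → H¹(Γ)` making the sequence
`0 → H⁰(Γ) → H⁰(A) ⊕ H⁰(B) → H⁰(A ∩ B) → H¹(Γ) → H¹(A) ⊕ H¹(B) → H¹(A ∩ B) → 0`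
exact, where the maps are `k* ⊕ l*` and `(f,g) ↦ i*f - j*g`. -/
theorem mayer_vietoris_for_graphs [Fintype V] {Γ : SimpleGraph V}
    (A B : Γ.Subgraph) (hAB : A ⊔ B = ⊤) :
    ∃ δ : H0 (A ⊓ B).coe →ₗ[ℝ] H1 Γ,
      Function.Injective ⇑(mvH0left A B) ∧
      Function.Exact ⇑(mvH0left A B) ⇑(mvH0right A B) ∧
      Function.Exact ⇑(mvH0right A B) ⇑δ ∧
      Function.Exact ⇑δ ⇑(mvH1left A B) ∧
      Function.Exact ⇑(mvH1left A B) ⇑(mvH1right A B) ∧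
      Function.Surjective ⇑(mvH1right A B) :=
  ⟨mvDelta A B, mv_inj A B hAB, mv_exact1 A B hAB, mv_exact2 A B hAB,
    mv_exact3 A B hAB, mv_exact4 A B, mv_surj A B⟩

end MayerVietoris
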